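/- Let p, τ̄ : ℝ → ℝ be measurable with p locally integrable, τ̄(t) ≤ t for all t, and τ̄(t) → ∞ as t → ∞. Define f(t) := ∫_0^t |p(s)| ds for t ≥ 0 and f(t) := t for t ≤ 0, and assume f(t) → ∞ as t → ∞. Define g(t) := inf{s ≥ 0 : f(s) = t} for t ≥ 0, and let x be a solution of x'(t) = p(t)·x(τ̄(t)) on [0, ∞) (i.e., x is continuous and x(t) = x(0) + ∫_0^t p(s)·x(τ̄(s)) ds for all t ≥ 0). Then: (i) x(g(f(t))) = x(t) for all t ≥ 0, so the function x̃ defined by x̃(s) := x(g(s)) for s ≥ 0 and x̃(s) := x(s) for s ≤ 0 satisfies x̃(f(t)) = x(t) for all t; (ii) p(g(s)) ≠ 0 for a.e. s ≥ 0; and (iii) x̃(s) = x̃(0) + ∫_0^s sgn(p(g(w)))·x̃(f(τ̄(g(w)))) dw for all s ≥ 0, where sgn is the sign function; in particular, since f(τ̄(g(w))) = τ̄(g(w)) when τ̄(g(w)) ≤ 0, the transformed function x̃ solves a delay equation whose coefficient has absolute value 1 almost everywhere. -/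

import Mathlib

open Real MeasureTheory Filter Set

noncomputable section

open scoped NNReal ENNReal

lemma measurable_realSign : Measurable Real.sign := by
  have h : Real.sign = fun r : ℝ => if r < 0 then (-1:ℝ) else if 0 < r then 1 else 0 := by
    funext r; rfl
  rw [h]
  exact Measurable.ite measurableSet_Iio measurable_const
    (Measurable.ite measurableSet_Ioi measurable_const measurable_const)

lemma abs_mul_realSign (a : ℝ) : |a| * Real.sign a = a := by
  rcases lt_trichotomy a 0 with h | h | h
  · rw [Real.sign_of_neg h, abs_of_neg h]; ring
  · simp [h]
  · rw [Real.sign_of_pos h, abs_of_pos h]; ring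

/-- `x` is the solution of `x'(t) = -x(t-τ)` with `x ≡ 1` on `(-∞,0]`:
`x(t) = 1 - ∫_0^t x(s-τ) ds` for `t ≥ 0`. -/
def IsXSol (τ : ℝ) (x : ℝ → ℝ) : Prop :=
  Continuous x ∧ (∀ t ≤ (0:ℝ), x t = 1) ∧
    ∀ t ≥ (0:ℝ), x t = 1 - ∫ s in (0:ℝ)..t, x (s - τ)

/-- The first positive root of a function. -/
noncomputable def firstRoot (x : ℝ → ℝ) : ℝ := sInf {t : ℝ | 0 < t ∧ x t = 0}

/-- `ψ` is the solution of `ψ'(t) = max{x_τ(ϱ(τ)+t-τ), ψ(t)}` on `[0,τ]`,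
`ψ'(t) = ψ(t)` on `[τ,∞)`, `ψ(0) = 0`. -/
def IsPsiSol (τ ρ : ℝ) (xτ ψ : ℝ → ℝ) : Prop :=
  ContinuousOn ψ (Ici (0:ℝ)) ∧ ψ 0 = 0 ∧
    (∀ t ∈ Icc (0:ℝ) τ, ψ t = ∫ s in (0:ℝ)..t, max (xτ (ρ + s - τ)) (ψ s)) ∧
    (∀ t ≥ τ, ψ t = ψ τ + ∫ s in τ..t, ψ s)

/-- A (continuous, integrated-form) solution of the delay equation
`x'(t) = p(t) x(τ̄(t))` on `[t₀,∞)`. -/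
def IsDelaySolution (p τd : ℝ → ℝ) (t₀ : ℝ) (x : ℝ → ℝ) : Prop :=
  Continuous x ∧ ∀ t ≥ t₀, x t = x t₀ + ∫ s in t₀..t, p s * x (τd s)

/-- `x` is `α`-oscillating: eventually every interval on which `x` has no zero
has length at most `α`. -/
def AlphaOscillating (α : ℝ) (x : ℝ → ℝ) : Prop :=
  ∃ T : ℝ, ∀ a b : ℝ, T ≤ a → a < b → (∀ t ∈ Ioo a b, x t ≠ 0) → b - a ≤ α

/-- `x` is oscillatory: it has arbitrarily large zeros. -/
def Oscillatory (x : ℝ → ℝ) : Prop := ∀ T : ℝ, ∃ t ≥ T, x t = 0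


theorem stmt19 (p τd : ℝ → ℝ) (hpm : Measurable p)
    (hploc : MeasureTheory.LocallyIntegrable p)
    (hτdm : Measurable τd) (hτdle : ∀ t, τd t ≤ t)
    (hτdinf : Filter.Tendsto τd Filter.atTop Filter.atTop)
    (f : ℝ → ℝ)
    (hf : ∀ t : ℝ, f t = if 0 ≤ t then ∫ s in (0:ℝ)..t, |p s| else t)
    (hfinf : Filter.Tendsto f Filter.atTop Filter.atTop)
    (g : ℝ → ℝ) (hg : ∀ t : ℝ, g t = sInf {s : ℝ | 0 ≤ s ∧ f s = t})
    (x : ℝ → ℝ) (hxc : Continuous x)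
    (hxsol : ∀ t ≥ (0:ℝ), x t = x 0 + ∫ s in (0:ℝ)..t, p s * x (τd s))
    (xt : ℝ → ℝ) (hxt : ∀ s : ℝ, xt s = if 0 ≤ s then x (g s) else x s) :
    (∀ t ≥ (0:ℝ), x (g (f t)) = x t) ∧
    (∀ t : ℝ, xt (f t) = x t) ∧
    (∀ᵐ s : ℝ ∂volume, 0 ≤ s → p (g s) ≠ 0) ∧
    (∀ s ≥ (0:ℝ),
      xt s = xt 0 + ∫ w in (0:ℝ)..s, Real.sign (p (g w)) * xt (f (τd (g w)))) := by
  
  set F : ℝ → ℝ := fun t => ∫ s in (0:ℝ)..t, |p s| with hF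
  have hpa : ∀ K : Set ℝ, IsCompact K → IntegrableOn (fun s => |p s|) K volume :=
    fun K hK => (hploc.integrableOn_isCompact hK).abs
  have hpInt : ∀ a b : ℝ, IntervalIntegrable (fun s => |p s|) volume a b :=
    fun a b => (hpa _ isCompact_uIcc).intervalIntegrable
  have hFc : Continuous F := intervalIntegral.continuous_primitive hpInt 0
  have hFsub : ∀ a b : ℝ, F b - F a = ∫ s in a..b, |p s| := by
    intro a b
    rw [hF]
    simp only
    rw [← intervalIntegral.integral_interval_sub_left (hpInt 0 b) (hpInt 0 a)]
  have hFmono : Monotone F := by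
    intro a b hab
    have h1 : 0 ≤ ∫ s in a..b, |p s| :=
      intervalIntegral.integral_nonneg hab (fun s _ => abs_nonneg _)
    have := hFsub a b
    linarith
  have hF0 : F 0 = 0 := intervalIntegral.integral_same
  have hfF : ∀ t : ℝ, 0 ≤ t → f t = F t := by
    intro t ht; rw [hf, if_pos ht]
  have hFnonneg : ∀ t : ℝ, 0 ≤ t → 0 ≤ F t := by
    intro t ht; rw [← hF0]; exact hFmono ht
  have hFtop : Tendsto F atTop atTop := by
    refine hfinf.congr' ?_
    filter_upwards [eventually_ge_atTop (0:ℝ)] with t ht using hfF t ht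
  have hSeq : ∀ w : ℝ, {s : ℝ | 0 ≤ s ∧ f s = w} = {s : ℝ | 0 ≤ s ∧ F s = w} := by
    intro w; ext s
    simp only [mem_setOf_eq]
    constructor
    · rintro ⟨h1, h2⟩; exact ⟨h1, by rw [← hfF s h1]; exact h2⟩
    · rintro ⟨h1, h2⟩; exact ⟨h1, by rw [hfF s h1]; exact h2⟩
  have hbdd : ∀ w : ℝ, BddBelow {s : ℝ | 0 ≤ s ∧ F s = w} :=
    fun w => ⟨0, fun y hy => hy.1⟩
  have hclosed : ∀ w : ℝ, IsClosed {s : ℝ | 0 ≤ s ∧ F s = w} := by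
    intro w
    have : {s : ℝ | 0 ≤ s ∧ F s = w} = Ici 0 ∩ F ⁻¹' {w} := by
      ext s; simp [mem_setOf_eq, mem_Ici]
    rw [this]
    exact isClosed_Ici.inter (isClosed_singleton.preimage hFc)
  have hne : ∀ w : ℝ, 0 ≤ w → {s : ℝ | 0 ≤ s ∧ F s = w}.Nonempty := by
    intro w hw
    obtain ⟨R, hR⟩ := (hFtop.eventually_ge_atTop w).and (eventually_ge_atTop (0:ℝ)) |>.exists
    have : w ∈ Icc (F 0) (F R) := ⟨by rwa [hF0], hR.1⟩
    obtain ⟨v, hv, hvw⟩ := intermediate_value_Icc hR.2 hFc.continuousOn this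
    exact ⟨v, hv.1, hvw⟩
  have hgmem : ∀ w : ℝ, 0 ≤ w → 0 ≤ g w ∧ F (g w) = w := by
    intro w hw
    have := (hclosed w).csInf_mem (hne w hw) (hbdd w)
    rw [hg, hSeq]
    exact ⟨this.1, this.2⟩
  have hg0 : ∀ w : ℝ, 0 ≤ g w := by
    intro w
    rw [hg]
    rcases eq_empty_or_nonempty {s : ℝ | 0 ≤ s ∧ f s = w} with h | h
    · rw [h, Real.sInf_empty]
    · exact Real.sInf_nonneg (fun y hy => hy.1)
  have hgle : ∀ w u : ℝ, 0 ≤ w → 0 ≤ u → (g w ≤ u ↔ w ≤ F u) := by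
    intro w u hw hu
    constructor
    · intro h
      calc w = F (g w) := (hgmem w hw).2.symm
        _ ≤ F u := hFmono h
    · intro h
      have : w ∈ Icc (F 0) (F u) := ⟨by rwa [hF0], h⟩
      obtain ⟨v, hv, hvw⟩ := intermediate_value_Icc hu hFc.continuousOn this
      calc g w ≤ v := by
            rw [hg, hSeq]; exact csInf_le (hbdd w) ⟨hv.1, hvw⟩
        _ ≤ u := hv.2
  -- Part 1
  have claim1 : ∀ t ≥ (0:ℝ), x (g (f t)) = x t := by
    intro t ht
    set a := g (f t) with ha
    have hft0 : 0 ≤ f t := by rw [hfF t ht]; exact hFnonneg t ht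
    have hmem := hgmem (f t) hft0
    have ha0 : 0 ≤ a := hmem.1
    have hat : a ≤ t := by
      rw [ha, hg, hSeq]
      exact csInf_le (hbdd _) ⟨ht, (hfF t ht).symm⟩
    have hFa : F a = F t := by rw [hmem.2, hfF t ht]
    have hint0 : ∫ s in Ioc a t, |p s| = 0 := by
      rw [← intervalIntegral.integral_of_le hat]
      have := hFsub a t
      linarith [hFsub a t]
    have hIntOn : IntegrableOn (fun s => |p s|) (Ioc a t) volume :=
      (hpa _ isCompact_Icc).mono_set Ioc_subset_Icc_self
    have hae : (fun s => |p s|) =ᵐ[volume.restrict (Ioc a t)] 0 := by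
      have hnn : 0 ≤ᵐ[volume.restrict (Ioc a t)] (fun s => |p s|) :=
        Filter.Eventually.of_forall (fun s => abs_nonneg _)
      exact (integral_eq_zero_iff_of_nonneg_ae hnn hIntOn).mp hint0
    have haeh : (fun s => p s * x (τd s)) =ᵐ[volume.restrict (Ioc a t)] 0 := by
      filter_upwards [hae] with s hs
      have : p s = 0 := abs_eq_zero.mp hs
      simp [this]
    -- split the integral
    have hkey : ∫ s in Ioc 0 t, p s * x (τd s) = ∫ s in Ioc 0 a, p s * x (τd s) := by
      have hsplit : Ioc (0:ℝ) t = Ioc 0 a ∪ Ioc a t := (Ioc_union_Ioc_eq_Ioc ha0 hat).symm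
      have hdisj : Disjoint (Ioc (0:ℝ) a) (Ioc a t) := Ioc_disjoint_Ioc_of_le le_rfl
      have hres : volume.restrict (Ioc (0:ℝ) t)
          = volume.restrict (Ioc 0 a) + volume.restrict (Ioc a t) := by
        rw [hsplit, Measure.restrict_union hdisj measurableSet_Ioc]
      have hind : (fun s => p s * x (τd s)) =ᵐ[volume.restrict (Ioc 0 t)]
          (Ioc (0:ℝ) a).indicator (fun s => p s * x (τd s)) := by
        rw [hres, EventuallyEq, ae_add_measure_iff]
        constructor
        · refine ae_restrict_of_forall_mem measurableSet_Ioc ?_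
          intro s hs
          rw [indicator_of_mem hs]
        · have h2 : ∀ᵐ s ∂volume.restrict (Ioc a t), s ∈ Ioc a t :=
            ae_restrict_mem measurableSet_Ioc
          filter_upwards [haeh, h2] with s hs hs2
          have hnot : s ∉ Ioc (0:ℝ) a := fun hmem2 => absurd hmem2.2 (not_le.mpr hs2.1)
          rw [hs, indicator_of_notMem hnot]
          simp
      rw [integral_congr_ae hind, setIntegral_indicator measurableSet_Ioc]
      congr 1
      rw [Ioc_inter_Ioc, max_self, min_eq_right hat]
    have hx_t := hxsol t ht
    have hx_a := hxsol a ha0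
    rw [intervalIntegral.integral_of_le ht, hkey,
      ← intervalIntegral.integral_of_le ha0, ← hx_a] at hx_t
    exact hx_t.symm
  -- Part 2
  have claim2 : ∀ t : ℝ, xt (f t) = x t := by
    intro t
    by_cases ht : 0 ≤ t
    · have hft0 : 0 ≤ f t := by rw [hfF t ht]; exact hFnonneg t ht
      rw [hxt, if_pos hft0]
      exact claim1 t ht
    · have hftt : f t = t := by rw [hf, if_neg ht]
      rw [hftt, hxt, if_neg ht]
  -- g is monotone and measurable
  have hgmono : Monotone g := by
    intro a b hab
    by_cases ha : 0 ≤ a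
    · have hb : 0 ≤ b := le_trans ha hab
      refine (hgle a (g b) ha (hg0 b)).2 ?_
      rw [(hgmem b hb).2]
      exact hab
    · have hempty : {s : ℝ | 0 ≤ s ∧ f s = a} = ∅ := by
        ext s
        simp only [mem_setOf_eq, mem_empty_iff_false, iff_false, not_and]
        intro hs heq
        have : 0 ≤ F s := hFnonneg s hs
        rw [← hfF s hs, heq] at this
        exact ha this
      have : g a = 0 := by rw [hg, hempty, Real.sInf_empty]
      rw [this]
      exact hg0 b
  have hgm : Measurable g := hgmono.measurable
  -- the pushforward identity
  have hmap : ∀ s : ℝ, 0 ≤ s →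
      Measure.map g (volume.restrict (Icc 0 s))
        = (volume.withDensity (fun u => ENNReal.ofReal |p u|)).restrict (Icc 0 (g s)) := by
    intro s hs
    haveI : IsFiniteMeasure (volume.restrict (Icc (0:ℝ) s)) := by
      constructor
      rw [Measure.restrict_apply_univ, Real.volume_Icc]
      exact ENNReal.ofReal_lt_top
    haveI : IsFiniteMeasure (Measure.map g (volume.restrict (Icc (0:ℝ) s))) :=
      Measure.isFiniteMeasure_map _ g
    refine Measure.ext_of_Iic _ _ (fun u => ?_)
    rw [Measure.map_apply hgm measurableSet_Iic,
      Measure.restrict_apply (hgm measurableSet_Iic),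
      Measure.restrict_apply' measurableSet_Icc,
      withDensity_apply _ ((measurableSet_Iic).inter measurableSet_Icc)]
    by_cases hu : 0 ≤ u
    · have hset1 : g ⁻¹' Iic u ∩ Icc 0 s = Icc 0 (min (F u) s) := by
        ext w
        simp only [mem_inter_iff, mem_preimage, mem_Iic, mem_Icc, le_min_iff]
        constructor
        · rintro ⟨h1, h2, h3⟩
          exact ⟨h2, (hgle w u h2 hu).1 h1, h3⟩
        · rintro ⟨h1, h2, h3⟩
          exact ⟨(hgle w u h1 hu).2 h2, h1, h3⟩
      have hset2 : Iic u ∩ Icc 0 (g s) = Icc 0 (min u (g s)) := by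
        ext w
        simp only [mem_inter_iff, mem_Iic, mem_Icc, le_min_iff]
        exact ⟨fun ⟨h1, h2, h3⟩ => ⟨h2, h1, h3⟩, fun ⟨h1, h2, h3⟩ => ⟨h2, h1, h3⟩⟩
      rw [hset1, hset2]
      set c := min u (g s) with hc
      have hc0 : 0 ≤ c := le_min hu (hg0 s)
      have hnn : 0 ≤ᵐ[volume.restrict (Icc 0 c)] (fun s => |p s|) :=
        Filter.Eventually.of_forall (fun s => abs_nonneg _)
      rw [← ofReal_integral_eq_lintegral_ofReal (hpa _ isCompact_Icc) hnn]
      have hicc : ∫ w in Icc (0:ℝ) c, |p w| = F c := by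
        rw [integral_Icc_eq_integral_Ioc, ← intervalIntegral.integral_of_le hc0]
      have hFcval : F c = min (F u) s := by
        rw [hc, hFmono.map_min, (hgmem s hs).2]
      rw [hicc, hFcval, Real.volume_Icc, sub_zero]
    · have hset1 : g ⁻¹' Iic u ∩ Icc 0 s = ∅ := by
        ext w
        simp only [mem_inter_iff, mem_preimage, mem_Iic, mem_Icc, mem_empty_iff_false,
          iff_false, not_and]
        intro h1
        exact absurd (le_trans (hg0 w) h1) hu
      have hset2 : Iic u ∩ Icc 0 (g s) = ∅ := by
        ext w
        simp only [mem_inter_iff, mem_Iic, mem_Icc, mem_empty_iff_false, iff_false]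
        rintro ⟨h1, h2, h3⟩
        exact absurd (le_trans h2 h1) hu
      rw [hset1, hset2]
      simp
  -- Part 3: a.e. nonvanishing
  have hZ : MeasurableSet {u : ℝ | p u = 0} := hpm (measurableSet_singleton 0)
  have hBnull : ∀ n : ℕ, volume ({w : ℝ | 0 ≤ w ∧ p (g w) = 0} ∩ Icc 0 (n:ℝ)) = 0 := by
    intro n
    have hsub : {w : ℝ | 0 ≤ w ∧ p (g w) = 0} ∩ Icc 0 (n:ℝ)
        = g ⁻¹' {u | p u = 0} ∩ Icc 0 (n:ℝ) := by
      ext w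
      simp only [mem_inter_iff, mem_setOf_eq, mem_preimage, mem_Icc]
      tauto
    rw [hsub, ← Measure.restrict_apply (hgm hZ),
      ← Measure.map_apply hgm hZ, hmap n (Nat.cast_nonneg n),
      Measure.restrict_apply' measurableSet_Icc,
      withDensity_apply _ (hZ.inter measurableSet_Icc)]
    have hae0 : ∀ᵐ u ∂volume.restrict ({u : ℝ | p u = 0} ∩ Icc 0 (g n)),
        ENNReal.ofReal |p u| = 0 := by
      refine ae_restrict_of_forall_mem (hZ.inter measurableSet_Icc) ?_
      intro u hu
      have : p u = 0 := hu.1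
      simp [this]
    rw [lintegral_congr_ae hae0, lintegral_zero]
  have part3 : ∀ᵐ s : ℝ ∂volume, 0 ≤ s → p (g s) ≠ 0 := by
    rw [ae_iff]
    have hset : {s : ℝ | ¬(0 ≤ s → p (g s) ≠ 0)} = {w : ℝ | 0 ≤ w ∧ p (g w) = 0} := by
      ext w
      simp only [mem_setOf_eq]
      push_neg
      rfl
    rw [hset]
    refine measure_mono_null ?_ (measure_iUnion_null hBnull)
    intro w hw
    exact mem_iUnion.2 ⟨⌈w⌉₊, hw, hw.1, Nat.le_ceil w⟩
  refine ⟨claim1, claim2, part3, ?_⟩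
  -- Part 4
  intro s hs
  set h : ℝ → ℝ := fun u => Real.sign (p u) * x (τd u) with hh
  have hhm : Measurable h := (measurable_realSign.comp hpm).mul (hxc.measurable.comp hτdm)
  have hg0eq : g 0 = 0 :=
    le_antisymm ((hgle 0 0 le_rfl le_rfl).2 (le_of_eq hF0.symm)) (hg0 0)
  have hxt0 : xt 0 = x 0 := by rw [hxt, if_pos le_rfl, hg0eq]
  have hxts : xt s = x (g s) := by rw [hxt, if_pos hs]
  have hintegrand : (fun w => Real.sign (p (g w)) * xt (f (τd (g w)))) = fun w => h (g w) := by
    funext w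
    rw [hh]
    simp only
    rw [claim2 (τd (g w))]
  have hWeq : (fun u : ℝ => ENNReal.ofReal |p u|) = (fun u => ((‖p u‖₊ : ℝ≥0) : ℝ≥0∞)) := by
    funext u
    rw [← Real.norm_eq_abs, ofReal_norm, enorm_eq_nnnorm]
  have chain : ∫ w in (0:ℝ)..s, h (g w) = ∫ u in Icc (0:ℝ) (g s), p u * x (τd u) := by
    rw [intervalIntegral.integral_of_le hs, ← integral_Icc_eq_integral_Ioc,
      ← integral_map hgm.aemeasurable hhm.aestronglyMeasurable, hmap s hs,
      restrict_withDensity measurableSet_Icc, hWeq,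
      integral_withDensity_eq_integral_smul hpm.nnnorm h]
    refine integral_congr_ae (Filter.Eventually.of_forall (fun u => ?_))
    simp only [NNReal.smul_def, coe_nnnorm, Real.norm_eq_abs, smul_eq_mul, hh]
    rw [← mul_assoc, abs_mul_realSign]
  have final : ∫ u in Icc (0:ℝ) (g s), p u * x (τd u) = x (g s) - x 0 := by
    rw [integral_Icc_eq_integral_Ioc, ← intervalIntegral.integral_of_le (hg0 s)]
    have := hxsol (g s) (hg0 s)
    linarith
  rw [hintegrand, hxt0, hxts, chain, final]
  ring
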